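/- Let A ⊆ ℝ^N be bounded and nondegenerate with D := dim_B(A) existing and 0 < M_*^D(A) ≤ M^{*D}(A) < ∞. If the tube zeta function ζ̃_A(s) = ∫_0^δ t^{s-N-1}|A_t| dt extends meromorphically to a neighborhood of s = D, then D is a simple pole of ζ̃_A and M_*^D(A) ≤ res(ζ̃_A, D) ≤ M^{*D}(A). In particular, if A is Minkowski measurable then res(ζ̃_A, D) = M^D(A). -/

import Mathlib

open MeasureTheory Metric Filter Set Topology Complex

/-- Lower Minkowski content of a bounded set `A ⊆ ℝ^N` in dimension `D`. -/
noncomputable def lowerMinkowskiContent (N : ℕ) (A : Set (EuclideanSpace ℝ (Fin N)))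
    (r : ℝ) : ENNReal :=
  Filter.liminf
    (fun t : ℝ => volume (Metric.thickening t A) / ENNReal.ofReal (t ^ ((N : ℝ) - r)))
    (nhdsWithin 0 (Set.Ioi 0))

/-- Upper Minkowski content of a bounded set `A ⊆ ℝ^N` in dimension `D`. -/
noncomputable def upperMinkowskiContent (N : ℕ) (A : Set (EuclideanSpace ℝ (Fin N)))
    (r : ℝ) : ENNReal :=
  Filter.limsup
    (fun t : ℝ => volume (Metric.thickening t A) / ENNReal.ofReal (t ^ ((N : ℝ) - r)))
    (nhdsWithin 0 (Set.Ioi 0))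

/-- The tube zeta function `ζ̃_A(s) = ∫_0^δ t^{s-N-1} |A_t| dt`. -/
noncomputable def tubeZeta (N : ℕ) (A : Set (EuclideanSpace ℝ (Fin N))) (δ : ℝ)
    (s : ℂ) : ℂ :=
  ∫ t in Set.Ioo (0 : ℝ) δ,
    (t : ℂ) ^ (s - (N : ℂ) - 1) * ((volume (Metric.thickening t A)).toReal : ℂ)

lemma myContinuous_const_rpow {b : ℝ} (hb : 0 < b) : Continuous (fun s : ℝ => b ^ s) := by
  have : (fun s : ℝ => b ^ s) = fun s => Real.exp (Real.log b * s) := by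
    funext s; rw [Real.rpow_def_of_pos hb]
  rw [this]; exact Real.continuous_exp.comp (continuous_const.mul continuous_id)

lemma myLint_rpow {a t₀ : ℝ} (ha : -1 < a) (ht₀ : 0 < t₀) :
    ∫⁻ t in Ioo (0:ℝ) t₀, ENNReal.ofReal (t ^ a) = ENNReal.ofReal (t₀ ^ (a+1) / (a+1)) := by
  have hint : IntegrableOn (fun t : ℝ => t ^ a) (Ioo 0 t₀) := by
    have h1 := (intervalIntegral.intervalIntegrable_rpow' (a := 0) (b := t₀) ha)
    rw [intervalIntegrable_iff, uIoc_of_le ht₀.le] at h1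
    exact h1.mono_set Ioo_subset_Ioc_self
  rw [← ofReal_integral_eq_lintegral_ofReal hint ?_]
  · congr 1
    have h2 : ∫ t in Ioo (0:ℝ) t₀, t ^ a = ∫ t in (0:ℝ)..t₀, t ^ a := by
      rw [intervalIntegral.integral_of_le ht₀.le, integral_Ioc_eq_integral_Ioo]
    rw [h2, integral_rpow (Or.inl ha), Real.zero_rpow (by linarith), sub_zero]
  · filter_upwards [ae_restrict_mem measurableSet_Ioo] with t ht
    exact Real.rpow_nonneg ht.1.le a

lemma myAux_lint (c : ENNReal) (hc : c ≠ ⊤) {t₀ s D : ℝ} (N : ℕ) (ht₀ : 0 < t₀) (hs : D < s) :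
    (∫⁻ t in Ioo (0:ℝ) t₀,
        ENNReal.ofReal (t ^ (s - (N:ℝ) - 1)) * (c * ENNReal.ofReal (t ^ ((N:ℝ) - D))))
      = c * ENNReal.ofReal (t₀ ^ (s - D) / (s - D)) := by
  have h1 : ∀ t ∈ Ioo (0:ℝ) t₀,
      ENNReal.ofReal (t ^ (s - (N:ℝ) - 1)) * (c * ENNReal.ofReal (t ^ ((N:ℝ) - D)))
        = c * ENNReal.ofReal (t ^ (s - D - 1)) := by
    intro t ht
    rw [mul_comm c, ← mul_assoc, ← ENNReal.ofReal_mul (Real.rpow_nonneg ht.1.le _),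
      ← Real.rpow_add ht.1, mul_comm]
    ring_nf
  rw [setLIntegral_congr_fun measurableSet_Ioo h1,
    lintegral_const_mul' c _ hc, myLint_rpow (by linarith) ht₀]
  ring_nf

/-- If `A` is Minkowski nondegenerate of dimension `D` and the tube zeta function
extends meromorphically to a neighborhood of `s = D`, then `D` is a simple pole of the
extension with residue `r` satisfying `M_*^D(A) ≤ r ≤ M^{*D}(A)`; in particular, if `A`
is Minkowski measurable, the residue equals the Minkowski content `M^D(A)`. -/
theorem stmt_19 (N : ℕ) (A : Set (EuclideanSpace ℝ (Fin N))) (hA : A.Nonempty)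
    (hAb : Bornology.IsBounded A) (δ : ℝ) (hδ : 0 < δ) (D : ℝ)
    (hnd₁ : 0 < lowerMinkowskiContent N A D)
    (hnd₂ : upperMinkowskiContent N A D < ⊤)
    (F : ℂ → ℂ) (ε : ℝ) (hε : 0 < ε)
    (hFhol : DifferentiableOn ℂ F (Metric.ball (D : ℂ) ε \ {(D : ℂ)}))
    (hFmer : MeromorphicAt F (D : ℂ))
    (hFeq : ∀ s ∈ Metric.ball (D : ℂ) ε, D < s.re → F s = tubeZeta N A δ s) :
    ∃ r : ℝ, 0 < r ∧
      Filter.Tendsto (fun s : ℂ => (s - (D : ℂ)) * F s)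
        (nhdsWithin (D : ℂ) {(D : ℂ)}ᶜ) (nhds (r : ℂ)) ∧
      lowerMinkowskiContent N A D ≤ ENNReal.ofReal r ∧
      ENNReal.ofReal r ≤ upperMinkowskiContent N A D ∧
      (lowerMinkowskiContent N A D = upperMinkowskiContent N A D →
        ENNReal.ofReal r = lowerMinkowskiContent N A D) := by
  classical
  set μV : ℝ → ENNReal := fun t => volume (thickening t A) with hμV
  have hmono : Monotone μV := fun a b hab => measure_mono (thickening_mono hab A)
  have hμmeas : Measurable μV := hmono.measurable
  have hfin : ∀ t : ℝ, t ≤ δ → μV t ≠ ⊤ := by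
    intro t ht
    exact ((measure_mono (thickening_mono ht A)).trans_lt
      hAb.thickening.measure_lt_top).ne
  set L : ℝ → ENNReal :=
    fun s => ∫⁻ t in Ioo (0:ℝ) δ, ENNReal.ofReal (t ^ (s - (N:ℝ) - 1)) * μV t with hLdef
  -- the tube zeta at real `s` is the (real) `toReal` of the Lebesgue integral `L s`
  have hzg : ∀ s : ℝ, tubeZeta N A δ (s : ℂ) = (((L s).toReal : ℝ) : ℂ) := by
    intro s
    have hmeasg : AEStronglyMeasurable (fun t : ℝ => t ^ (s - (N:ℝ) - 1) * (μV t).toReal)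
        (volume.restrict (Ioo (0:ℝ) δ)) := by
      refine AEStronglyMeasurable.mul ?_ (hμmeas.ennreal_toReal.aestronglyMeasurable)
      refine ContinuousOn.aestronglyMeasurable ?_ measurableSet_Ioo
      intro t ht
      exact (Real.continuousAt_rpow_const t _ (Or.inl ht.1.ne')).continuousWithinAt
    have h1 : tubeZeta N A δ (s : ℂ)
        = ((∫ t in Ioo (0:ℝ) δ, t ^ (s - (N:ℝ) - 1) * (μV t).toReal : ℝ) : ℂ) := by
      rw [tubeZeta]
      calc ∫ t in Ioo (0:ℝ) δ, (t : ℂ) ^ ((s:ℂ) - (N : ℂ) - 1)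
              * ((volume (Metric.thickening t A)).toReal : ℂ)
          = ∫ t in Ioo (0:ℝ) δ, ((t ^ (s - (N:ℝ) - 1) * (μV t).toReal : ℝ) : ℂ) := by
            refine setIntegral_congr_fun measurableSet_Ioo (fun t ht => ?_)
            have he : ((s - (N:ℝ) - 1 : ℝ) : ℂ) = (s:ℂ) - (N:ℂ) - 1 := by push_cast; ring
            rw [Complex.ofReal_mul, Complex.ofReal_cpow ht.1.le, he]
        _ = ((∫ t in Ioo (0:ℝ) δ, t ^ (s - (N:ℝ) - 1) * (μV t).toReal : ℝ) : ℂ) :=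
            integral_ofReal
    have h2 : ∫ t in Ioo (0:ℝ) δ, t ^ (s - (N:ℝ) - 1) * (μV t).toReal = (L s).toReal := by
      rw [integral_eq_lintegral_of_nonneg_ae ?_ hmeasg]
      · congr 1
        refine setLIntegral_congr_fun measurableSet_Ioo ?_
        intro t ht
        dsimp only
        rw [ENNReal.ofReal_mul (Real.rpow_nonneg ht.1.le _),
          ENNReal.ofReal_toReal (hfin t ht.2.le)]
      · filter_upwards [ae_restrict_mem measurableSet_Ioo] with t ht
        exact mul_nonneg (Real.rpow_nonneg ht.1.le _) ENNReal.toReal_nonneg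
    rw [h1, h2]
  -- general upper estimate
  have upev : ∀ C : ENNReal, upperMinkowskiContent N A D < C → C ≠ ⊤ →
      ∃ u : ℝ → ℝ, Tendsto u (nhdsWithin D (Ioi D)) (nhds C.toReal) ∧
        ∀ᶠ s in nhdsWithin D (Ioi D), L s ≠ ⊤ ∧ (s - D) * (L s).toReal ≤ u s := by
    intro C hC hCtop
    have hev : ∀ᶠ t in nhdsWithin (0:ℝ) (Ioi 0),
        μV t ≤ C * ENNReal.ofReal (t ^ ((N:ℝ) - D)) := by
      have h1 := eventually_lt_of_limsup_lt hC
      filter_upwards [h1, self_mem_nhdsWithin] with t h2 (ht : (0:ℝ) < t)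
      have hd0 : ENNReal.ofReal (t ^ ((N:ℝ) - D)) ≠ 0 :=
        (ENNReal.ofReal_pos.mpr (Real.rpow_pos_of_pos ht _)).ne'
      rw [ENNReal.div_lt_iff (Or.inl hd0) (Or.inl ENNReal.ofReal_ne_top)] at h2
      exact h2.le
    obtain ⟨t₁, ht₁, hsub⟩ := mem_nhdsGT_iff_exists_Ioo_subset.mp hev
    set t₀ : ℝ := min t₁ δ with ht₀def
    have ht₀ : 0 < t₀ := lt_min ht₁ hδ
    have ht₀δ : t₀ ≤ δ := min_le_right _ _
    set T : ℝ → ℝ := fun s =>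
      (t₀ ^ (s - (N:ℝ) - 1) + δ ^ (s - (N:ℝ) - 1)) * (μV δ).toReal * (δ - t₀) with hTdef
    have hTc : Continuous T := by
      refine Continuous.mul (Continuous.mul ?_ continuous_const) continuous_const
      exact ((myContinuous_const_rpow ht₀).comp
          ((continuous_id.sub continuous_const).sub continuous_const)).add
        ((myContinuous_const_rpow hδ).comp
          ((continuous_id.sub continuous_const).sub continuous_const))
    refine ⟨fun s => C.toReal * t₀ ^ (s - D) + (s - D) * T s, ?_, ?_⟩
    · have htt : Tendsto (fun s : ℝ => t₀ ^ (s - D)) (nhdsWithin D (Ioi D)) (nhds 1) := by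
        have hc1 : Continuous (fun s : ℝ => t₀ ^ (s - D)) :=
          (myContinuous_const_rpow ht₀).comp (continuous_id.sub continuous_const)
        have h2 := (hc1.tendsto D).mono_left (nhdsWithin_le_nhds (s := Ioi D))
        simpa [Real.rpow_zero] using h2
      have hsd : Tendsto (fun s : ℝ => s - D) (nhdsWithin D (Ioi D)) (nhds 0) := by
        have hc2 : Continuous (fun s : ℝ => s - D) := continuous_id.sub continuous_const
        have h2 := (hc2.tendsto D).mono_left (nhdsWithin_le_nhds (s := Ioi D))
        simpa using h2
      have hTt := (hTc.tendsto D).mono_left (nhdsWithin_le_nhds (s := Ioi D))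
      have h3 := (Tendsto.mul (tendsto_const_nhds (x := C.toReal)) htt).add (hsd.mul hTt)
      simpa using h3
    · filter_upwards [Ioo_mem_nhdsGT_of_mem ⟨le_refl D, lt_add_one D⟩] with s hs
      have hsD : 0 < s - D := sub_pos.mpr hs.1
      have hnn1 : (0:ℝ) ≤ t₀ ^ (s - D) / (s - D) :=
        div_nonneg (Real.rpow_nonneg ht₀.le _) hsD.le
      have hxy : (0:ℝ) ≤ t₀ ^ (s - (N:ℝ) - 1) + δ ^ (s - (N:ℝ) - 1) :=
        add_nonneg (Real.rpow_nonneg ht₀.le _) (Real.rpow_nonneg hδ.le _)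
      have hTnn : 0 ≤ T s :=
        mul_nonneg (mul_nonneg hxy ENNReal.toReal_nonneg) (sub_nonneg.mpr ht₀δ)
      have hofT : ENNReal.ofReal (T s)
          = (ENNReal.ofReal (t₀ ^ (s - (N:ℝ) - 1) + δ ^ (s - (N:ℝ) - 1)) * μV δ)
            * ENNReal.ofReal (δ - t₀) := by
        rw [hTdef]
        rw [ENNReal.ofReal_mul (mul_nonneg hxy ENNReal.toReal_nonneg),
          ENNReal.ofReal_mul hxy, ENNReal.ofReal_toReal (hfin δ le_rfl)]
      have hsplit : L s ≤ C * ENNReal.ofReal (t₀ ^ (s - D) / (s - D))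
          + ENNReal.ofReal (T s) := by
        have hdom : Ioo (0:ℝ) δ = Ioo 0 t₀ ∪ Ico t₀ δ :=
          (Ioo_union_Ico_eq_Ioo ht₀ ht₀δ).symm
        have hLe : L s = ∫⁻ t in Ioo (0:ℝ) δ,
            ENNReal.ofReal (t ^ (s - (N:ℝ) - 1)) * μV t := rfl
        rw [hLe, hdom]
        refine le_trans (lintegral_union_le _ _ _) (add_le_add ?_ ?_)
        · rw [← myAux_lint C hCtop N ht₀ hs.1]
          refine lintegral_mono_ae ?_
          filter_upwards [ae_restrict_mem measurableSet_Ioo] with t ht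
          exact mul_le_mul_right (hsub ⟨ht.1, ht.2.trans_le (min_le_left _ _)⟩) _
        · have hb : ∀ t ∈ Ico t₀ δ, ENNReal.ofReal (t ^ (s - (N:ℝ) - 1)) * μV t
              ≤ ENNReal.ofReal (t₀ ^ (s - (N:ℝ) - 1) + δ ^ (s - (N:ℝ) - 1)) * μV δ := by
            intro t ht
            refine mul_le_mul' (ENNReal.ofReal_le_ofReal ?_) (hmono ht.2.le)
            rcases le_or_gt 0 (s - (N:ℝ) - 1) with ha | ha
            · calc t ^ (s - (N:ℝ) - 1) ≤ δ ^ (s - (N:ℝ) - 1) :=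
                  Real.rpow_le_rpow (le_trans ht₀.le ht.1) ht.2.le ha
                _ ≤ _ := le_add_of_nonneg_left (Real.rpow_nonneg ht₀.le _)
            · calc t ^ (s - (N:ℝ) - 1) ≤ t₀ ^ (s - (N:ℝ) - 1) :=
                  Real.rpow_le_rpow_of_nonpos ht₀ ht.1 ha.le
                _ ≤ _ := le_add_of_nonneg_right (Real.rpow_nonneg hδ.le _)
          calc (∫⁻ t in Ico t₀ δ, ENNReal.ofReal (t ^ (s - (N:ℝ) - 1)) * μV t)
              ≤ ∫⁻ _ in Ico t₀ δ,
                  ENNReal.ofReal (t₀ ^ (s - (N:ℝ) - 1) + δ ^ (s - (N:ℝ) - 1)) * μV δ := by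
                refine lintegral_mono_ae ?_
                filter_upwards [ae_restrict_mem measurableSet_Ico] with t ht
                exact hb t ht
            _ = (ENNReal.ofReal (t₀ ^ (s - (N:ℝ) - 1) + δ ^ (s - (N:ℝ) - 1)) * μV δ)
                * volume (Ico t₀ δ) := setLIntegral_const _ _
            _ = ENNReal.ofReal (T s) := by rw [Real.volume_Ico, hofT]
      have hfinsum : C * ENNReal.ofReal (t₀ ^ (s - D) / (s - D))
          + ENNReal.ofReal (T s) ≠ ⊤ :=
        ENNReal.add_ne_top.mpr
          ⟨ENNReal.mul_ne_top hCtop ENNReal.ofReal_ne_top, ENNReal.ofReal_ne_top⟩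
      have hLne : L s ≠ ⊤ := ne_top_of_le_ne_top hfinsum hsplit
      refine ⟨hLne, ?_⟩
      have h2 : (L s).toReal ≤ C.toReal * (t₀ ^ (s - D) / (s - D)) + T s := by
        have h3 := ENNReal.toReal_mono hfinsum hsplit
        rwa [ENNReal.toReal_add (ENNReal.mul_ne_top hCtop ENNReal.ofReal_ne_top)
          ENNReal.ofReal_ne_top, ENNReal.toReal_mul, ENNReal.toReal_ofReal hnn1,
          ENNReal.toReal_ofReal hTnn] at h3
      calc (s - D) * (L s).toReal
          ≤ (s - D) * (C.toReal * (t₀ ^ (s - D) / (s - D)) + T s) :=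
            mul_le_mul_of_nonneg_left h2 hsD.le
        _ = C.toReal * t₀ ^ (s - D) + (s - D) * T s := by
            field_simp
  have hLfin : ∀ᶠ s in nhdsWithin D (Ioi D), L s ≠ ⊤ := by
    obtain ⟨C, hC1, hC2⟩ := exists_between hnd₂
    obtain ⟨u, _, hu⟩ := upev C hC1 hC2.ne
    exact hu.mono fun s hs => hs.1
  -- general lower estimate
  have lowev : ∀ c : ENNReal, c < lowerMinkowskiContent N A D →
      ∃ u : ℝ → ℝ, Tendsto u (nhdsWithin D (Ioi D)) (nhds c.toReal) ∧
        ∀ᶠ s in nhdsWithin D (Ioi D), u s ≤ (s - D) * (L s).toReal := by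
    intro c hc
    have hctop : c ≠ ⊤ := (hc.trans_le le_top).ne
    have hev : ∀ᶠ t in nhdsWithin (0:ℝ) (Ioi 0),
        c * ENNReal.ofReal (t ^ ((N:ℝ) - D)) ≤ μV t := by
      have h1 := eventually_lt_of_lt_liminf hc
      filter_upwards [h1, self_mem_nhdsWithin] with t h2 (ht : (0:ℝ) < t)
      have hd0 : ENNReal.ofReal (t ^ ((N:ℝ) - D)) ≠ 0 :=
        (ENNReal.ofReal_pos.mpr (Real.rpow_pos_of_pos ht _)).ne'
      rw [ENNReal.lt_div_iff_mul_lt (Or.inl hd0) (Or.inl ENNReal.ofReal_ne_top)] at h2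
      exact h2.le
    obtain ⟨t₁, ht₁, hsub⟩ := mem_nhdsGT_iff_exists_Ioo_subset.mp hev
    set t₀ : ℝ := min t₁ δ with ht₀def
    have ht₀ : 0 < t₀ := lt_min ht₁ hδ
    have ht₀δ : t₀ ≤ δ := min_le_right _ _
    refine ⟨fun s => c.toReal * t₀ ^ (s - D), ?_, ?_⟩
    · have hc1 : Continuous (fun s : ℝ => c.toReal * t₀ ^ (s - D)) :=
        continuous_const.mul
          ((myContinuous_const_rpow ht₀).comp (continuous_id.sub continuous_const))
      have h2 := (hc1.tendsto D).mono_left (nhdsWithin_le_nhds (s := Ioi D))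
      simpa [Real.rpow_zero] using h2
    · filter_upwards [Ioo_mem_nhdsGT_of_mem ⟨le_refl D, lt_add_one D⟩, hLfin] with s hs hLf
      have hsD : 0 < s - D := sub_pos.mpr hs.1
      have hlow : c * ENNReal.ofReal (t₀ ^ (s - D) / (s - D)) ≤ L s := by
        rw [← myAux_lint c hctop N ht₀ hs.1]
        refine le_trans (lintegral_mono_ae ?_)
          (lintegral_mono_set (Ioo_subset_Ioo_right ht₀δ))
        filter_upwards [ae_restrict_mem measurableSet_Ioo] with t ht
        exact mul_le_mul_right (hsub ⟨ht.1, ht.2.trans_le (min_le_left _ _)⟩) _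
      have h2 : c.toReal * (t₀ ^ (s - D) / (s - D)) ≤ (L s).toReal := by
        have h3 := ENNReal.toReal_mono hLf hlow
        rwa [ENNReal.toReal_mul, ENNReal.toReal_ofReal
          (div_nonneg (Real.rpow_nonneg ht₀.le _) hsD.le)] at h3
      calc c.toReal * t₀ ^ (s - D)
          = (s - D) * (c.toReal * (t₀ ^ (s - D) / (s - D))) := by field_simp
        _ ≤ (s - D) * (L s).toReal := mul_le_mul_of_nonneg_left h2 hsD.le
  -- the real axis approach filter
  have hreal : Tendsto (fun s : ℝ => (s : ℂ)) (nhdsWithin D (Ioi D))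
      (nhdsWithin (D : ℂ) {(D : ℂ)}ᶜ) := by
    refine tendsto_nhdsWithin_of_tendsto_nhds_of_eventually_within _
      ((Complex.continuous_ofReal.tendsto D).mono_left nhdsWithin_le_nhds) ?_
    filter_upwards [self_mem_nhdsWithin] with s (hs : D < s)
    simp only [mem_compl_iff, mem_singleton_iff]
    exact fun h => hs.ne' (Complex.ofReal_inj.mp h)
  have hPhiR : ∀ᶠ (s : ℝ) in nhdsWithin D (Ioi D),
      ((s:ℂ) - (D:ℂ)) * F (s:ℂ) = (((s - D) * (L s).toReal : ℝ) : ℂ) := by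
    have hball : Ioo D (D + ε) ∈ nhdsWithin D (Ioi D) :=
      Ioo_mem_nhdsGT_of_mem ⟨le_refl D, by linarith⟩
    filter_upwards [hball] with s hs
    have hsD : D < s := hs.1
    have hmem : (s:ℂ) ∈ Metric.ball (D:ℂ) ε := by
      rw [mem_ball, Complex.dist_eq, ← Complex.ofReal_sub, Complex.norm_real, Real.norm_eq_abs,
        abs_of_pos (by linarith)]
      linarith [hs.2]
    rw [hFeq _ hmem (by simpa using hsD), hzg s]
    push_cast
    ring
  -- fixed constants
  obtain ⟨c₀, hc₀0, hc₀lt⟩ := exists_between hnd₁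
  have hc₀top : c₀ ≠ ⊤ := (hc₀lt.trans_le le_top).ne
  have hc₀pos : 0 < c₀.toReal := ENNReal.toReal_pos hc₀0.ne' hc₀top
  obtain ⟨C₀, hC₀lt, hC₀top⟩ := exists_between hnd₂
  obtain ⟨ul, hul_t, hul_ev⟩ := lowev c₀ hc₀lt
  obtain ⟨uu, huu_t, huu_ev⟩ := upev C₀ hC₀lt hC₀top.ne
  have hlb : ∀ᶠ s in nhdsWithin D (Ioi D), c₀.toReal / 2 ≤ (s - D) * (L s).toReal := by
    filter_upwards [hul_ev,
      hul_t.eventually (eventually_ge_nhds (by linarith : c₀.toReal / 2 < c₀.toReal))]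
      with s h1 h2
    exact le_trans h2 h1
  have hub : ∀ᶠ s in nhdsWithin D (Ioi D), (s - D) * (L s).toReal ≤ C₀.toReal + 1 := by
    filter_upwards [huu_ev,
      huu_t.eventually (eventually_le_nhds (lt_add_one C₀.toReal))] with s h1 h2
    exact h1.2.trans h2
  -- case analysis on the order of the pole
  cases h_order : meromorphicOrderAt F (D:ℂ) with
  | top =>
    exfalso
    have hF0 : ∀ᶠ z in nhdsWithin (D:ℂ) {(D:ℂ)}ᶜ, F z = 0 := meromorphicOrderAt_eq_top_iff.mp h_order
    have h1 : ∀ᶠ (s : ℝ) in nhdsWithin D (Ioi D), ((s:ℂ) - (D:ℂ)) * F (s:ℂ) = 0 :=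
      (hreal.eventually hF0).mono fun s hs => by rw [hs, mul_zero]
    obtain ⟨s, hz, he, hl⟩ := (h1.and (hPhiR.and hlb)).exists
    rw [he] at hz
    rw [Complex.ofReal_eq_zero] at hz
    rw [hz] at hl
    linarith
  | coe n =>
    obtain ⟨G, hG, hGne, hGeq⟩ := (meromorphicOrderAt_eq_int_iff hFmer).mp h_order
    have hΦeq : ∀ᶠ z in nhdsWithin (D:ℂ) {(D:ℂ)}ᶜ,
        (z - (D:ℂ)) * F z = (z - (D:ℂ)) ^ (n+1) * G z := by
      filter_upwards [hGeq, self_mem_nhdsWithin] with z hz hz'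
      have hne : z - (D:ℂ) ≠ 0 :=
        sub_ne_zero.mpr (by simpa [mem_compl_iff, mem_singleton_iff] using hz')
      rw [hz, smul_eq_mul, zpow_add_one₀ hne]
      ring
    rcases lt_trichotomy n (-1) with hn | hn | hn
    · -- order too negative : contradiction with boundedness
      exfalso
      set k : ℕ := (-(n+1)).toNat with hk
      have hkpos : k ≠ 0 := by omega
      have hGid : ∀ᶠ z in nhdsWithin (D:ℂ) {(D:ℂ)}ᶜ,
          G z = (z - (D:ℂ))^(k:ℕ) * ((z - (D:ℂ)) * F z) := by
        filter_upwards [hΦeq, self_mem_nhdsWithin] with z hz hz'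
        have hne : z - (D:ℂ) ≠ 0 :=
          sub_ne_zero.mpr (by simpa [mem_compl_iff, mem_singleton_iff] using hz')
        rw [hz, ← mul_assoc]
        have h2 : (z - (D:ℂ))^(k:ℕ) * (z - (D:ℂ)) ^ (n+1) = 1 := by
          rw [← zpow_natCast, ← zpow_add₀ hne]
          have h3 : (k:ℤ) = -(n+1) := Int.toNat_of_nonneg (by omega)
          have h4 : (-(n+1)) + (n+1) = 0 := by ring
          rw [h3, h4, zpow_zero]
        rw [h2, one_mul]
      have hGR : Tendsto (fun s : ℝ => G (s:ℂ)) (nhdsWithin D (Ioi D)) (nhds (G (D:ℂ))) :=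
        (hG.continuousAt.tendsto.mono_left nhdsWithin_le_nhds).comp hreal
      have hzero : Tendsto (fun s : ℝ => G (s:ℂ)) (nhdsWithin D (Ioi D)) (nhds 0) := by
        have heq : ∀ᶠ (s : ℝ) in nhdsWithin D (Ioi D),
            ((s:ℂ) - (D:ℂ))^(k:ℕ) * (((s - D) * (L s).toReal : ℝ) : ℂ) = G (s:ℂ) := by
          filter_upwards [hreal.eventually hGid, hPhiR] with s h1 h2
          rw [h1, h2]
        refine Tendsto.congr' heq ?_
        apply squeeze_zero_norm' (a := fun s : ℝ => |s - D|^(k:ℕ) * (C₀.toReal + 1))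
        · filter_upwards [hlb, hub, self_mem_nhdsWithin] with s h1 h2 (hs : D < s)
          rw [norm_mul, norm_pow]
          have hsd : ‖(s:ℂ) - (D:ℂ)‖ = |s - D| := by
            rw [← Complex.ofReal_sub, Complex.norm_real, Real.norm_eq_abs]
          have hnr : ‖(((s - D) * (L s).toReal : ℝ) : ℂ)‖ ≤ C₀.toReal + 1 := by
            rw [Complex.norm_real, Real.norm_eq_abs, _root_.abs_of_nonneg (by linarith)]
            exact h2
          rw [hsd]
          exact mul_le_mul_of_nonneg_left hnr (by positivity)
        · have h3 : Tendsto (fun s : ℝ => |s - D|) (nhdsWithin D (Ioi D)) (nhds 0) := by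
            have h3' : Continuous (fun s : ℝ => |s - D|) :=
              _root_.continuous_abs.comp (continuous_id.sub continuous_const)
            have h3'' := (h3'.tendsto D).mono_left (nhdsWithin_le_nhds (s := Ioi D))
            simpa using h3''
          have h4 := (h3.pow (k:ℕ)).mul_const (C₀.toReal + 1)
          simpa [zero_pow hkpos] using h4
      exact hGne (tendsto_nhds_unique hGR hzero)
    · -- simple pole : the main case
      subst hn
      have hΦG : (fun z => (z - (D:ℂ)) * F z) =ᶠ[nhdsWithin (D:ℂ) {(D:ℂ)}ᶜ] G := by
        filter_upwards [hΦeq] with z hz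
        simpa using hz
      have hΦtend : Tendsto (fun z => (z - (D:ℂ)) * F z)
          (nhdsWithin (D:ℂ) {(D:ℂ)}ᶜ) (nhds (G (D:ℂ))) :=
        (hG.continuousAt.tendsto.mono_left nhdsWithin_le_nhds).congr' hΦG.symm
      have hhC : Tendsto (fun s : ℝ => (((s - D) * (L s).toReal : ℝ) : ℂ))
          (nhdsWithin D (Ioi D)) (nhds (G (D:ℂ))) :=
        ((hΦtend.comp hreal).congr' hPhiR)
      set r : ℝ := (G (D:ℂ)).re with hrdef
      have him : (G (D:ℂ)).im = 0 := by
        have h1 := (Complex.continuous_im.tendsto _).comp hhC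
        simp only [Function.comp_def, Complex.ofReal_im] at h1
        exact tendsto_nhds_unique h1 tendsto_const_nhds
      have hGr : G (D:ℂ) = (r:ℂ) := Complex.ext rfl (by simp [him])
      have hhR : Tendsto (fun s : ℝ => (s - D) * (L s).toReal)
          (nhdsWithin D (Ioi D)) (nhds r) := by
        have h1 := (Complex.continuous_re.tendsto _).comp hhC
        simpa [Function.comp_def] using h1
      have hle_low : ∀ c : ENNReal, c < lowerMinkowskiContent N A D → c.toReal ≤ r := by
        intro c hc
        obtain ⟨u, hu_t, hu_ev⟩ := lowev c hc
        exact le_of_tendsto_of_tendsto hu_t hhR hu_ev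
      have hle_up : ∀ C : ENNReal, upperMinkowskiContent N A D < C → C ≠ ⊤ →
          r ≤ C.toReal := by
        intro C h1 h2
        obtain ⟨u, hu_t, hu_ev⟩ := upev C h1 h2
        exact le_of_tendsto_of_tendsto hhR hu_t (hu_ev.mono fun s hs => hs.2)
      have hrpos : 0 < r := lt_of_lt_of_le hc₀pos (hle_low c₀ hc₀lt)
      have hlow' : lowerMinkowskiContent N A D ≤ ENNReal.ofReal r := by
        by_contra hcon
        push_neg at hcon
        obtain ⟨c, h1, h2⟩ := exists_between hcon
        have hc_top : c ≠ ⊤ := (h2.trans_le le_top).ne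
        have h3 : c ≤ ENNReal.ofReal r := by
          rw [← ENNReal.ofReal_toReal hc_top]
          exact ENNReal.ofReal_le_ofReal (hle_low c h2)
        exact absurd h3 (not_le.mpr h1)
      have hup' : ENNReal.ofReal r ≤ upperMinkowskiContent N A D := by
        by_contra hcon
        push_neg at hcon
        obtain ⟨C, h1, h2⟩ := exists_between hcon
        have hC_top : C ≠ ⊤ := (h2.trans_le le_top).ne
        have h3 : ENNReal.ofReal r ≤ C := by
          calc ENNReal.ofReal r ≤ ENNReal.ofReal C.toReal :=
                ENNReal.ofReal_le_ofReal (hle_up C h1 hC_top)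
            _ = C := ENNReal.ofReal_toReal hC_top
        exact absurd h3 (not_le.mpr h2)
      exact ⟨r, hrpos, hGr ▸ hΦtend, hlow', hup',
        fun hme => le_antisymm (hme ▸ hup') hlow'⟩
    · -- order nonnegative : contradiction with lower bound
      exfalso
      obtain ⟨k, hk1⟩ : ∃ k : ℕ, n + 1 = (k:ℤ) := ⟨(n+1).toNat, by omega⟩
      have hkpos : k ≠ 0 := by omega
      have hΦ0 : Tendsto (fun z => (z - (D:ℂ)) * F z)
          (nhdsWithin (D:ℂ) {(D:ℂ)}ᶜ) (nhds 0) := by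
        have hc : ContinuousAt (fun z : ℂ => (z - (D:ℂ))^(k:ℕ) * G z) (D:ℂ) :=
          (((continuous_id.sub continuous_const).pow (k:ℕ)).continuousAt).mul hG.continuousAt
        have h1 := hc.tendsto
        rw [show ((D:ℂ) - (D:ℂ))^(k:ℕ) * G (D:ℂ) = 0 by
          simp [sub_self, zero_pow hkpos]] at h1
        refine (h1.mono_left nhdsWithin_le_nhds).congr' ?_
        filter_upwards [hΦeq] with z hz
        rw [hz, hk1, zpow_natCast]
      have hhz : Tendsto (fun s : ℝ => (s - D) * (L s).toReal)
          (nhdsWithin D (Ioi D)) (nhds 0) := by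
        have h2 := hΦ0.comp hreal
        have h3 : Tendsto (fun s : ℝ => (((s - D) * (L s).toReal : ℝ) : ℂ))
            (nhdsWithin D (Ioi D)) (nhds 0) := h2.congr' hPhiR
        have h4 := (Complex.continuous_re.tendsto _).comp h3
        simpa [Function.comp_def] using h4
      have h5 : c₀.toReal / 2 ≤ (0:ℝ) :=
        le_of_tendsto_of_tendsto tendsto_const_nhds hhz hlb
      linarith
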